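/- Let A be a finite alphabet, Q ∈ P(A), and Ω ⊆ P(A). Then there exists a sequence {M_n} of subsets M_n ⊆ Aⁿ such that lim_{n→∞} Pⁿ(M_n) = 1 for every P ∈ Ω, and lim_{n→∞} (1/n) log Qⁿ(M_n) = −inf_{P∈Ω} H(P,Q). Moreover, every sequence {M̃_n} with lim_{n→∞} Pⁿ(M̃_n) = 1 for all P ∈ Ω satisfies liminf_{n→∞} (1/n) log Qⁿ(M̃_n) ≥ −inf_{P∈Ω} H(P,Q). -/

import Mathlib

open Filter Finset

/-- Base-2 relative entropy (real-valued formula; meaningful when `P ≪ Q`). -/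
noncomputable def klD {A : Type*} [Fintype A] (P Q : A → ℝ) : ℝ :=
  ∑ a, P a * (Real.logb 2 (P a) - Real.logb 2 (Q a))

/-- Base-2 relative entropy with value `⊤` when `P` is not absolutely continuous w.r.t. `Q`. -/
noncomputable def klDE {A : Type*} [Fintype A] (P Q : A → ℝ) : EReal :=
  if ∀ a, Q a = 0 → P a = 0 then ((klD P Q : ℝ) : EReal) else ⊤

/-- ℓ¹ distance. -/
noncomputable def l1 {A : Type*} [Fintype A] (P Q : A → ℝ) : ℝ := ∑ a, |P a - Q a|

/-- Probability distribution on a finite set. -/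
def IsProbDist {A : Type*} [Fintype A] (P : A → ℝ) : Prop := (∀ a, 0 ≤ P a) ∧ ∑ a, P a = 1

/-- Empirical distribution (type) of a sequence. -/
noncomputable def emp {A : Type*} [Fintype A] [DecidableEq A] {n : ℕ} (x : Fin n → A) : A → ℝ :=
  fun a => ((Finset.univ.filter fun i => x i = a).card : ℝ) / n

/-- Product (i.i.d.) measure of a set of sequences. -/
noncomputable def prodP {A : Type*} [Fintype A] (Q : A → ℝ) {n : ℕ} (M : Set (Fin n → A)) : ℝ :=
  ∑ x : Fin n → A, Set.indicator M (fun y => ∏ i, Q (y i)) x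

/-- Base-2 logarithm with value `⊥` at nonpositive reals. -/
noncomputable def elog2 (t : ℝ) : EReal := if t ≤ 0 then ⊥ else ((Real.logb 2 t : ℝ) : EReal)

section SanovAux
set_option maxHeartbeats 1000000
set_option linter.unusedSectionVars false
set_option linter.unusedVariables false
variable {A : Type*} [Fintype A] [DecidableEq A]


lemma sum_count {n : ℕ} (x : Fin n → A) :
    ∑ a, ((univ.filter fun i => x i = a).card : ℝ) = n := by
  have : (univ : Finset (Fin n)).card = ∑ a, (univ.filter fun i => x i = a).card :=
    Finset.card_eq_sum_card_fiberwise (fun i _ => Finset.mem_univ (x i))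
  have := congrArg (fun m : ℕ => (m : ℝ)) this
  simp only [Nat.cast_sum, Finset.card_univ, Fintype.card_fin] at this
  linarith [this]

lemma sum_count_nat {n : ℕ} (x : Fin n → A) :
    ∑ a, (univ.filter fun i => x i = a).card = n := by
  have : (univ : Finset (Fin n)).card = ∑ a, (univ.filter fun i => x i = a).card :=
    Finset.card_eq_sum_card_fiberwise (fun i _ => Finset.mem_univ (x i))
  simpa using this.symm

lemma sum_comp_count {n : ℕ} (x : Fin n → A) (g : A → ℝ) :
    ∑ i, g (x i) = ∑ a, ((univ.filter fun i => x i = a).card : ℝ) * g a := by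
  rw [← Finset.sum_fiberwise univ (fun i => x i) (fun i => g (x i))]
  refine Finset.sum_congr rfl fun a _ => ?_
  rw [Finset.sum_congr rfl (fun i hi => by rw [(Finset.mem_filter.1 hi).2]),
    Finset.sum_const, nsmul_eq_mul]

lemma klD_mul_log2 (R Q : A → ℝ) :
    klD R Q * Real.log 2 = ∑ a, R a * (Real.log (R a) - Real.log (Q a)) := by
  unfold klD
  rw [Finset.sum_mul]
  refine Finset.sum_congr rfl fun a _ => ?_
  unfold Real.logb
  have h2 : Real.log 2 ≠ 0 := by
    have := Real.log_two_gt_d9; linarith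
  field_simp

lemma emp_pos_at {n : ℕ} (x : Fin n → A) (hn : 1 ≤ n) (i : Fin n) : 0 < emp x (x i) := by
  unfold emp
  have hc : 0 < (univ.filter fun j => x j = x i).card :=
    Finset.card_pos.2 ⟨i, Finset.mem_filter.2 ⟨Finset.mem_univ i, rfl⟩⟩
  have hn' : (0:ℝ) < n := by exact_mod_cast hn
  positivity

lemma weight_eq {Q : A → ℝ} {n : ℕ} (hn : 1 ≤ n) (x : Fin n → A)
    (hx : ∀ i, 0 < Q (x i)) :
    ∏ i, Q (x i) = (2:ℝ) ^ (-(n:ℝ) * klD (emp x) Q) * ∏ i, emp x (x i) := by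
  have hn' : (0:ℝ) < n := by exact_mod_cast hn
  set R := emp x with hR
  have hRpos : ∀ i, 0 < R (x i) := fun i => emp_pos_at x hn i
  have step1 : ∏ i, Q (x i) = (∏ i, (Q (x i) / R (x i))) * ∏ i, R (x i) := by
    rw [← Finset.prod_mul_distrib]
    exact Finset.prod_congr rfl fun i _ => (div_mul_cancel₀ _ (hRpos i).ne').symm
  have step2 : ∏ i, (Q (x i) / R (x i)) = Real.exp (∑ i, (Real.log (Q (x i)) - Real.log (R (x i)))) := by
    rw [Real.exp_sum]
    refine Finset.prod_congr rfl fun i _ => ?_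
    rw [← Real.log_div (hx i).ne' (hRpos i).ne', Real.exp_log (div_pos (hx i) (hRpos i))]
  have step3 : ∑ i, (Real.log (Q (x i)) - Real.log (R (x i)))
      = -(n:ℝ) * (klD R Q * Real.log 2) := by
    rw [sum_comp_count x (fun a => Real.log (Q a) - Real.log (R a)), klD_mul_log2,
      Finset.mul_sum]
    refine Finset.sum_congr rfl fun a _ => ?_
    have hcount : ((univ.filter fun i => x i = a).card : ℝ) = n * R a := by
      rw [hR]; unfold emp; field_simp
    rw [hcount]
    ring
  have step4 : (2:ℝ) ^ (-(n:ℝ) * klD R Q) = Real.exp (-(n:ℝ) * (klD R Q * Real.log 2)) := by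
    rw [Real.rpow_def_of_pos (by norm_num : (0:ℝ) < 2)]
    ring_nf
  rw [step1, step2, step3, step4]

lemma sum_emp_le (n : ℕ) :
    ∑ x : Fin n → A, ∏ i, emp x (x i) ≤ ((n:ℝ)+1)^(Fintype.card A) := by
  classical
  set cnt : (Fin n → A) → (A → Fin (n+1)) := fun x a =>
    ⟨(univ.filter fun i => x i = a).card,
     Nat.lt_succ_of_le ((Finset.card_filter_le _ _).trans (by simp))⟩ with hcnt
  have inner : ∀ c : A → Fin (n+1),
      ∑ x ∈ univ.filter (fun x => cnt x = c), ∏ i, emp x (x i) ≤ 1 := by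
    intro c
    rcases (univ.filter (fun x : Fin n → A => cnt x = c)).eq_empty_or_nonempty with he | hne
    · rw [he, Finset.sum_empty]; norm_num
    · obtain ⟨x₀, hx₀⟩ := hne
      have hx₀c : cnt x₀ = c := (Finset.mem_filter.1 hx₀).2
      set Rc : A → ℝ := fun a => ((c a : ℕ) : ℝ) / n with hRc
      have hRcnn : ∀ a, 0 ≤ Rc a := fun a => by positivity
      have hempeq : ∀ x ∈ univ.filter (fun x : Fin n → A => cnt x = c), emp x = Rc := by
        intro x hxm
        funext a
        have : cnt x = c := (Finset.mem_filter.1 hxm).2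
        have : ((univ.filter fun i => x i = a).card : ℕ) = (c a : ℕ) := by
          rw [← this]
        unfold emp
        rw [hRc, this]
      have hsumRc : ∑ a, Rc a ≤ 1 := by
        have : ∑ a, ((c a : ℕ) : ℝ) = n := by
          have := sum_count (A := A) x₀
          rw [← hx₀c]
          exact_mod_cast this
        rw [hRc]
        rcases Nat.eq_zero_or_pos n with h0 | h0
        · subst h0; simp
        · rw [← Finset.sum_div, this]
          have : (0:ℝ) < n := by exact_mod_cast h0
          rw [div_self this.ne']
      calc ∑ x ∈ univ.filter (fun x : Fin n → A => cnt x = c), ∏ i, emp x (x i)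
          = ∑ x ∈ univ.filter (fun x : Fin n → A => cnt x = c), ∏ i, Rc (x i) := by
            refine Finset.sum_congr rfl fun x hxm => ?_
            rw [hempeq x hxm]
        _ ≤ ∑ x : Fin n → A, ∏ i, Rc (x i) := by
            refine Finset.sum_le_sum_of_subset_of_nonneg (Finset.filter_subset _ _) ?_
            intro x _ _
            exact Finset.prod_nonneg fun i _ => hRcnn (x i)
        _ = ∏ i : Fin n, ∑ a, Rc a := by
            rw [Finset.prod_univ_sum, Fintype.piFinset_univ]
        _ ≤ 1 := by
            calc ∏ i : Fin n, ∑ a, Rc a ≤ ∏ i : Fin n, (1:ℝ) := by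
                  refine Finset.prod_le_prod (fun i _ => Finset.sum_nonneg fun a _ => hRcnn a)
                    (fun i _ => hsumRc)
              _ = 1 := Finset.prod_const_one
  calc ∑ x : Fin n → A, ∏ i, emp x (x i)
      = ∑ c : A → Fin (n+1), ∑ x ∈ univ.filter (fun x => cnt x = c), ∏ i, emp x (x i) :=
        (Finset.sum_fiberwise univ cnt _).symm
    _ ≤ ∑ c : A → Fin (n+1), (1:ℝ) := Finset.sum_le_sum fun c _ => inner c
    _ = (Fintype.card (A → Fin (n+1)) : ℝ) := by
        rw [Finset.sum_const, Finset.card_univ, nsmul_eq_mul, mul_one]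
    _ = ((n:ℝ)+1)^(Fintype.card A) := by
        rw [Fintype.card_fun, Fintype.card_fin]
        push_cast
        ring

lemma count_bound (Q : A → ℝ) (hQ0 : ∀ a, 0 ≤ Q a) {n : ℕ} (hn : 1 ≤ n)
    (M : Set (Fin n → A)) (c : ℝ)
    (hM : ∀ x ∈ M, (∀ i, Q (x i) ≠ 0) → c ≤ klD (emp x) Q) :
    prodP Q M ≤ ((n:ℝ)+1)^(Fintype.card A) * (2:ℝ)^(-(n:ℝ)*c) := by
  classical
  have term : ∀ x : Fin n → A,
      Set.indicator M (fun y => ∏ i, Q (y i)) x ≤ (2:ℝ)^(-(n:ℝ)*c) * ∏ i, emp x (x i) := by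
    intro x
    by_cases hxM : x ∈ M
    · rw [Set.indicator_of_mem hxM]
      by_cases hz : ∀ i, Q (x i) ≠ 0
      · have hpos : ∀ i, 0 < Q (x i) := fun i => lt_of_le_of_ne (hQ0 (x i)) (Ne.symm (hz i))
        rw [weight_eq hn x hpos]
        have hexp : (2:ℝ) ^ (-(n:ℝ) * klD (emp x) Q) ≤ (2:ℝ)^(-(n:ℝ)*c) := by
          apply Real.rpow_le_rpow_of_exponent_le (by norm_num)
          have := hM x hxM hz
          have hn' : (0:ℝ) ≤ n := by positivity
          nlinarith
        exact mul_le_mul_of_nonneg_right hexp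
          (Finset.prod_nonneg fun i _ => (emp_pos_at x hn i).le)
      · push_neg at hz
        obtain ⟨i, hi⟩ := hz
        rw [Finset.prod_eq_zero (Finset.mem_univ i) hi]
        exact mul_nonneg (Real.rpow_nonneg (by norm_num) _)
          (Finset.prod_nonneg fun j _ => by unfold emp; positivity)
    · rw [Set.indicator_of_notMem hxM]
      exact mul_nonneg (Real.rpow_nonneg (by norm_num) _)
        (Finset.prod_nonneg fun j _ => by unfold emp; positivity)
  calc prodP Q M ≤ ∑ x : Fin n → A, (2:ℝ)^(-(n:ℝ)*c) * ∏ i, emp x (x i) :=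
        Finset.sum_le_sum fun x _ => term x
    _ = (2:ℝ)^(-(n:ℝ)*c) * ∑ x : Fin n → A, ∏ i, emp x (x i) := by rw [← Finset.mul_sum]
    _ ≤ (2:ℝ)^(-(n:ℝ)*c) * ((n:ℝ)+1)^(Fintype.card A) := by
        refine mul_le_mul_of_nonneg_left (sum_emp_le n) ?_
        positivity
    _ = ((n:ℝ)+1)^(Fintype.card A) * (2:ℝ)^(-(n:ℝ)*c) := mul_comm _ _

lemma klD_continuous (Q : A → ℝ) : Continuous fun R : A → ℝ => klD R Q := by
  unfold klD
  refine continuous_finset_sum _ fun a _ => ?_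
  have h1 : Continuous fun R : A → ℝ => R a * Real.logb 2 (R a) := by
    have : (fun R : A → ℝ => R a * Real.logb 2 (R a))
        = fun R : A → ℝ => (R a * Real.log (R a)) / Real.log 2 := by
      funext R; unfold Real.logb; ring
    rw [this]
    exact (Real.continuous_mul_log.comp (continuous_apply a)).div_const _
  have h2 : Continuous fun R : A → ℝ => R a * Real.logb 2 (Q a) :=
    (continuous_apply a).mul continuous_const
  have : (fun R : A → ℝ => R a * (Real.logb 2 (R a) - Real.logb 2 (Q a)))
      = fun R : A → ℝ => R a * Real.logb 2 (R a) - R a * Real.logb 2 (Q a) := by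
    funext R; ring
  rw [this]
  exact h1.sub h2

lemma klD_unif (Q : A → ℝ) {ε : ℝ} (hε : 0 < ε) :
    ∃ δ : ℝ, 0 < δ ∧ ∀ R P : A → ℝ, (∀ a, 0 ≤ R a ∧ R a ≤ 1) → (∀ a, 0 ≤ P a ∧ P a ≤ 1) →
      (∀ a, |R a - P a| ≤ δ) → |klD R Q - klD P Q| ≤ ε := by
  classical
  set K : Set (A → ℝ) := Set.pi Set.univ (fun _ => Set.Icc (0:ℝ) 1) with hK
  have hKc : IsCompact K := isCompact_univ_pi fun _ => isCompact_Icc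
  have huc : UniformContinuousOn (fun R : A → ℝ => klD R Q) K :=
    hKc.uniformContinuousOn_of_continuous (klD_continuous Q).continuousOn
  rw [Metric.uniformContinuousOn_iff] at huc
  obtain ⟨δ, hδ, hδ'⟩ := huc ε hε
  refine ⟨δ/2, by linarith, fun R P hR hP hd => ?_⟩
  have hRK : R ∈ K := fun a _ => ⟨(hR a).1, (hR a).2⟩
  have hPK : P ∈ K := fun a _ => ⟨(hP a).1, (hP a).2⟩
  have hdist : dist R P ≤ δ/2 := by
    rw [dist_pi_le_iff (by linarith)]
    intro a
    rw [Real.dist_eq]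
    exact hd a
  have := hδ' R hRK P hPK (lt_of_le_of_lt hdist (by linarith))
  rw [Real.dist_eq] at this
  exact this.le

lemma klD_lb {Q P : A → ℝ} (hQ : (∀ a, 0 ≤ Q a) ∧ ∑ a, Q a = 1)
    (hP : (∀ a, 0 ≤ P a) ∧ ∑ a, P a = 1) :
    -(2 * Fintype.card A) ≤ klD P Q := by
  have hlog2 : (1:ℝ)/2 ≤ Real.log 2 := by
    have := Real.log_two_gt_d9; linarith
  have term : ∀ a, -2 ≤ P a * (Real.logb 2 (P a) - Real.logb 2 (Q a)) := by
    intro a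
    have hPa := hP.1 a
    have hPa1 : P a ≤ 1 := by
      rw [← hP.2]; exact Finset.single_le_sum (fun b _ => hP.1 b) (Finset.mem_univ a)
    have hQa1 : Q a ≤ 1 := by
      rw [← hQ.2]; exact Finset.single_le_sum (fun b _ => hQ.1 b) (Finset.mem_univ a)
    have h2 : P a * Real.logb 2 (Q a) ≤ 0 := by
      rcases eq_or_lt_of_le (hQ.1 a) with h0 | h0
      · rw [← h0]; simp [Real.logb]
      · have : Real.logb 2 (Q a) ≤ 0 :=
          Real.logb_nonpos (by norm_num) (hQ.1 a) hQa1
        exact mul_nonpos_of_nonneg_of_nonpos hPa this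
    have h1 : -2 ≤ P a * Real.logb 2 (P a) := by
      rcases eq_or_lt_of_le hPa with h0 | h0
      · rw [← h0]; norm_num
      · have hlg : P a * Real.log (P a) ≥ P a - 1 := by
          have := Real.log_le_sub_one_of_pos (show (0:ℝ) < (P a)⁻¹ by positivity)
          rw [Real.log_inv] at this
          have h3 : -Real.log (P a) ≤ (P a)⁻¹ - 1 := this
          have := mul_le_mul_of_nonneg_left h3 h0.le
          have h4 : P a * (P a)⁻¹ = 1 := mul_inv_cancel₀ h0.ne'
          nlinarith
        have : P a * Real.logb 2 (P a) = (P a * Real.log (P a)) / Real.log 2 := by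
          unfold Real.logb; ring
        rw [this]
        rw [ge_iff_le] at hlg
        have hnum : (-1:ℝ) ≤ P a * Real.log (P a) := by linarith
        have hlogpos : (0:ℝ) < Real.log 2 := by linarith
        rw [le_div_iff₀ hlogpos]
        nlinarith [Real.log_le_sub_one_of_pos (show (0:ℝ) < 2 by norm_num)]
    nlinarith
  unfold klD
  calc -(2 * (Fintype.card A : ℝ)) = ∑ _a : A, (-2 : ℝ) := by
        rw [Finset.sum_const, Finset.card_univ, nsmul_eq_mul]; ring
    _ ≤ ∑ a, P a * (Real.logb 2 (P a) - Real.logb 2 (Q a)) :=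
        Finset.sum_le_sum fun a _ => term a



lemma weight_nonneg {Q : A → ℝ} (hQ : ∀ a, 0 ≤ Q a) {n : ℕ} (x : Fin n → A) :
    0 ≤ ∏ i, Q (x i) := Finset.prod_nonneg fun i _ => hQ (x i)

lemma prodP_nonneg {Q : A → ℝ} (hQ : ∀ a, 0 ≤ Q a) {n : ℕ} (M : Set (Fin n → A)) :
    0 ≤ prodP Q M :=
  Finset.sum_nonneg fun x _ => Set.indicator_nonneg (fun y _ => weight_nonneg hQ y) x

lemma prodP_mono {Q : A → ℝ} (hQ : ∀ a, 0 ≤ Q a) {n : ℕ} {M N : Set (Fin n → A)}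
    (h : M ⊆ N) : prodP Q M ≤ prodP Q N :=
  Finset.sum_le_sum fun x _ =>
    Set.indicator_le_indicator_of_subset h (fun y => weight_nonneg hQ y) x

lemma prodP_univ {Q : A → ℝ} (hQ : IsProbDist Q) (n : ℕ) :
    prodP Q (Set.univ : Set (Fin n → A)) = 1 := by
  unfold prodP
  simp only [Set.indicator_univ]
  rw [← Fintype.piFinset_univ, ← Finset.prod_univ_sum (fun _ : Fin n => (univ : Finset A))
      (fun _ a => Q a)]
  simp [hQ.2]

lemma prodP_add_compl {Q : A → ℝ} (hQ : IsProbDist Q) {n : ℕ} (M : Set (Fin n → A)) :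
    prodP Q M + prodP Q Mᶜ = 1 := by
  rw [← prodP_univ hQ n]
  unfold prodP
  rw [← Finset.sum_add_distrib]
  congr 1; funext x
  classical
  by_cases hx : x ∈ M <;> simp [Set.indicator_apply, hx]

lemma prodP_le_one {Q : A → ℝ} (hQ : IsProbDist Q) {n : ℕ} (M : Set (Fin n → A)) :
    prodP Q M ≤ 1 := by
  rw [← prodP_univ hQ n]
  exact prodP_mono hQ.1 (Set.subset_univ M)

lemma prodP_union_le {Q : A → ℝ} (hQ : ∀ a, 0 ≤ Q a) {n : ℕ} (M N : Set (Fin n → A)) :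
    prodP Q (M ∪ N) ≤ prodP Q M + prodP Q N := by
  unfold prodP
  rw [← Finset.sum_add_distrib]
  refine Finset.sum_le_sum fun x _ => ?_
  classical
  by_cases hx : x ∈ M <;> by_cases hy : x ∈ N <;>
    simp [Set.indicator_apply, hx, hy, weight_nonneg hQ x]

lemma prodP_split {Q : A → ℝ} {n : ℕ} (M T : Set (Fin n → A)) :
    prodP Q M = prodP Q (M ∩ T) + prodP Q (M \ T) := by
  unfold prodP
  rw [← Finset.sum_add_distrib]
  congr 1; funext x
  classical
  by_cases hx : x ∈ M <;> by_cases ht : x ∈ T <;>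
    simp [Set.indicator_apply, hx, ht]

lemma prodP_inter_ge {Q : A → ℝ} (hQ : IsProbDist Q) {n : ℕ} (M T : Set (Fin n → A)) :
    prodP Q M + prodP Q T - 1 ≤ prodP Q (M ∩ T) := by
  have h1 := prodP_split (Q := Q) M T
  have h2 : prodP Q (M \ T) ≤ prodP Q Tᶜ :=
    prodP_mono hQ.1 (fun x hx => hx.2)
  have h3 := prodP_add_compl hQ (n := n) T
  linarith

lemma emp_nonneg {n : ℕ} (x : Fin n → A) (a : A) : 0 ≤ emp x a := by
  unfold emp; positivity

lemma sum_emp {n : ℕ} (hn : 1 ≤ n) (x : Fin n → A) : ∑ a, emp x a = 1 := by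
  unfold emp
  rw [← Finset.sum_div, sum_count]
  field_simp

lemma emp_le_one {n : ℕ} (x : Fin n → A) (a : A) : emp x a ≤ 1 := by
  unfold emp
  rcases Nat.eq_zero_or_pos n with h | h
  · subst h; simp
  · rw [div_le_one (by exact_mod_cast h)]
    exact_mod_cast Finset.card_le_card (Finset.subset_univ _) |>.trans_eq (by simp)


lemma EP_factor (Q : A → ℝ) {n : ℕ} (g : Fin n → A → ℝ) :
    ∑ x : Fin n → A, ∏ i, (Q (x i) * g i (x i)) = ∏ i, (∑ a, Q a * g i a) := by
  rw [Finset.prod_univ_sum, Fintype.piFinset_univ]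

lemma EP_single (Q : A → ℝ) (hQ : ∑ a, Q a = 1) {n : ℕ} (i : Fin n) (f : A → ℝ) :
    ∑ x : Fin n → A, (∏ k, Q (x k)) * f (x i) = ∑ a, Q a * f a := by
  classical
  have h : ∀ x : Fin n → A, (∏ k, Q (x k)) * f (x i)
      = ∏ k, (Q (x k) * (if k = i then f (x k) else 1)) := by
    intro x
    rw [Finset.prod_mul_distrib]
    congr 1
    rw [Finset.prod_eq_single i (fun k _ hk => by simp [hk]) (by simp)]
    simp
  calc ∑ x : Fin n → A, (∏ k, Q (x k)) * f (x i)
      = ∑ x : Fin n → A, ∏ k, (Q (x k) * (if k = i then f (x k) else 1)) := by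
        exact Finset.sum_congr rfl fun x _ => h x
    _ = ∏ k, (∑ a, Q a * (if k = i then f a else 1)) := by
        rw [Finset.prod_univ_sum, Fintype.piFinset_univ]
    _ = ∑ a, Q a * f a := by
        rw [Finset.prod_eq_single i (fun k _ hk => by simp [hk, hQ]) (by simp)]
        simp

lemma EP_pair (Q : A → ℝ) (hQ : ∑ a, Q a = 1) {n : ℕ} {i j : Fin n} (hij : i ≠ j)
    (f g : A → ℝ) :
    ∑ x : Fin n → A, (∏ k, Q (x k)) * (f (x i) * g (x j))
      = (∑ a, Q a * f a) * (∑ a, Q a * g a) := by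
  classical
  set G : Fin n → A → ℝ := fun k a => if k = i then f a else if k = j then g a else 1 with hG
  have key : ∀ (F : A → ℝ) (hF : ∀ k (a : A), k ≠ i → k ≠ j → G k a = 1)
      (v : Fin n → ℝ), True := fun _ _ _ => trivial
  have hprod : ∀ v : Fin n → ℝ, (∀ k, k ≠ i → k ≠ j → v k = 1) → ∏ k, v k = v i * v j := by
    intro v hv
    rw [← Finset.mul_prod_erase univ v (Finset.mem_univ i),
        ← Finset.mul_prod_erase _ v (Finset.mem_erase.2 ⟨hij.symm, Finset.mem_univ j⟩),
        Finset.prod_eq_one (fun k hk => hv k (Finset.ne_of_mem_erase (Finset.mem_of_mem_erase hk)) (Finset.ne_of_mem_erase hk))]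
    ring
  have h : ∀ x : Fin n → A, (∏ k, Q (x k)) * (f (x i) * g (x j))
      = ∏ k, (Q (x k) * G k (x k)) := by
    intro x
    rw [Finset.prod_mul_distrib, hprod (fun k => G k (x k))
      (fun k hk1 hk2 => by simp [hG, hk1, hk2])]
    simp [hG, hij, Ne.symm hij]
  rw [Finset.sum_congr rfl fun x _ => h x,
    show ∑ x : Fin n → A, ∏ k, (Q (x k) * G k (x k)) = ∏ k, (∑ a, Q a * G k a) from by
      rw [Finset.prod_univ_sum, Fintype.piFinset_univ],
    hprod (fun k => ∑ a, Q a * G k a) (fun k hk1 hk2 => by simp [hG, hk1, hk2, hQ])]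
  simp [hG, hij, Ne.symm hij]

lemma single_le_one {P : A → ℝ} (hP : IsProbDist P) (a : A) : P a ≤ 1 := by
  rw [← hP.2]
  exact Finset.single_le_sum (fun b _ => hP.1 b) (Finset.mem_univ a)

lemma cheb_one (P : A → ℝ) (hP : IsProbDist P) {n : ℕ} (hn : 1 ≤ n) {δ : ℝ} (hδ : 0 < δ)
    (a : A) :
    prodP P {x : Fin n → A | δ < |emp x a - P a|} ≤ 1 / (n * δ^2) := by
  classical
  have hn' : (0:ℝ) < n := by exact_mod_cast hn
  set h : A → ℝ := fun b => (if b = a then (1:ℝ) else 0) - P a with hh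
  have hsum : ∀ x : Fin n → A, ∑ i, h (x i) = n * (emp x a - P a) := by
    intro x
    simp only [hh]
    rw [Finset.sum_sub_distrib]
    simp only [Finset.sum_boole, Finset.sum_const, Finset.card_univ, Fintype.card_fin,
      nsmul_eq_mul]
    unfold emp
    field_simp
  -- second moment
  have hm1 : ∑ b, P b * h b = 0 := by
    simp only [hh, mul_sub, Finset.sum_sub_distrib, mul_ite, mul_one, mul_zero,
      Finset.sum_ite_eq', Finset.mem_univ, if_true, ← Finset.sum_mul, hP.2]
    ring
  have hm2 : ∑ b, P b * (h b * h b) ≤ 1 := by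
    have : ∀ b, P b * (h b * h b) ≤ P b := by
      intro b
      have h1 : |h b| ≤ 1 := by
        simp only [hh]
        have := hP.1 a
        have := single_le_one hP a
        split <;> rw [abs_le] <;> constructor <;> linarith
      have h2 : h b * h b ≤ 1 := by
        nlinarith [abs_mul_abs_self (h b), abs_nonneg (h b)]
      calc P b * (h b * h b) ≤ P b * 1 := mul_le_mul_of_nonneg_left h2 (hP.1 b)
        _ = P b := mul_one _
    calc ∑ b, P b * (h b * h b) ≤ ∑ b, P b := Finset.sum_le_sum fun b _ => this b
      _ = 1 := hP.2
  have hV : ∑ x : Fin n → A, (∏ k, P (x k)) * (∑ i, h (x i))^2 ≤ n := by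
    have expand : ∀ x : Fin n → A, (∏ k, P (x k)) * (∑ i, h (x i))^2
        = ∑ i, ∑ j, (∏ k, P (x k)) * (h (x i) * h (x j)) := by
      intro x
      rw [sq, Finset.sum_mul_sum]
      rw [Finset.mul_sum]
      exact Finset.sum_congr rfl fun i _ => by rw [Finset.mul_sum]
    calc ∑ x : Fin n → A, (∏ k, P (x k)) * (∑ i, h (x i))^2
        = ∑ i : Fin n, ∑ j : Fin n, ∑ x : Fin n → A, (∏ k, P (x k)) * (h (x i) * h (x j)) := by
          rw [Finset.sum_congr rfl fun x _ => expand x]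
          rw [Finset.sum_comm]
          exact Finset.sum_congr rfl fun i _ => Finset.sum_comm
      _ = ∑ i : Fin n, ∑ j : Fin n, (if i = j then ∑ b, P b * (h b * h b) else 0) := by
          refine Finset.sum_congr rfl fun i _ => Finset.sum_congr rfl fun j _ => ?_
          split
          · next heq => subst heq; exact EP_single P hP.2 i (fun b => h b * h b)
          · next hne =>
              rw [EP_pair P hP.2 hne h h, hm1]
              ring
      _ = ∑ i : Fin n, ∑ b, P b * (h b * h b) := by
          refine Finset.sum_congr rfl fun i _ => ?_
          simp
      _ ≤ ∑ i : Fin n, (1:ℝ) := Finset.sum_le_sum fun i _ => hm2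
      _ = n := by simp
  -- Markov
  have markov : prodP P {x : Fin n → A | δ < |emp x a - P a|}
      ≤ (∑ x : Fin n → A, (∏ k, P (x k)) * (∑ i, h (x i))^2) / (n * δ)^2 := by
    rw [Finset.sum_div]
    refine Finset.sum_le_sum fun x _ => ?_
    have hw : 0 ≤ ∏ k, P (x k) := Finset.prod_nonneg fun k _ => hP.1 (x k)
    by_cases hx : x ∈ {x : Fin n → A | δ < |emp x a - P a|}
    · rw [Set.indicator_of_mem hx]
      have h2 : (n * δ)^2 ≤ (∑ i, h (x i))^2 := by
        rw [hsum x]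
        have : δ < |emp x a - P a| := hx
        have hnd : 0 < n * δ := by positivity
        calc (n*δ)^2 ≤ (n * |emp x a - P a|)^2 := by
              have : n * δ ≤ n * |emp x a - P a| := by
                apply mul_le_mul_of_nonneg_left (le_of_lt this) (le_of_lt hn')
              nlinarith
          _ = (n * (emp x a - P a))^2 := by
              rw [mul_pow, mul_pow, sq_abs]
        -- done
      rw [le_div_iff₀ (by positivity)]
      calc (∏ i, P (x i)) * (n * δ)^2 ≤ (∏ i, P (x i)) * (∑ i, h (x i))^2 := by
            exact mul_le_mul_of_nonneg_left h2 hw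
        _ = (∏ k, P (x k)) * (∑ i, h (x i))^2 := rfl
    · rw [Set.indicator_of_notMem hx]
      exact div_nonneg (mul_nonneg hw (sq_nonneg _)) (sq_nonneg _)
  have hfin : (∑ x : Fin n → A, (∏ k, P (x k)) * (∑ i, h (x i))^2) / (n * δ)^2
      ≤ (n:ℝ) / (n*δ)^2 :=
    div_le_div_of_nonneg_right hV (by positivity) |>.trans_eq rfl
  have heq : (n:ℝ) / (n*δ)^2 = 1 / (n * δ^2) := by
    field_simp
  calc prodP P {x : Fin n → A | δ < |emp x a - P a|}
      ≤ (∑ x : Fin n → A, (∏ k, P (x k)) * (∑ i, h (x i))^2) / (n * δ)^2 := markov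
    _ ≤ (n:ℝ) / (n*δ)^2 := hfin
    _ = 1 / (n * δ^2) := heq

lemma cheb (P : A → ℝ) (hP : IsProbDist P) {n : ℕ} (hn : 1 ≤ n) {δ : ℝ} (hδ : 0 < δ) :
    prodP P {x : Fin n → A | ∃ a, δ < |emp x a - P a|} ≤ (Fintype.card A : ℝ) / (n * δ^2) := by
  classical
  have key : prodP P {x : Fin n → A | ∃ a, δ < |emp x a - P a|}
      ≤ ∑ a : A, prodP P {x : Fin n → A | δ < |emp x a - P a|} := by
    unfold prodP
    rw [Finset.sum_comm]
    refine Finset.sum_le_sum fun x _ => ?_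
    set w : (Fin n → A) → ℝ := fun y => ∏ i, P (y i) with hw'
    have hwnn : ∀ y : Fin n → A, 0 ≤ w y := fun y => Finset.prod_nonneg fun k _ => hP.1 (y k)
    set F : A → ℝ := fun b => Set.indicator {y : Fin n → A | δ < |emp y b - P b|} w x with hF
    have hFnn : ∀ b, 0 ≤ F b := fun b => Set.indicator_nonneg (fun y _ => hwnn y) x
    show Set.indicator {y : Fin n → A | ∃ a, δ < |emp y a - P a|} w x ≤ ∑ b, F b
    by_cases hx : x ∈ {y : Fin n → A | ∃ a, δ < |emp y a - P a|}
    · obtain ⟨a, ha⟩ := hx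
      rw [Set.indicator_of_mem (show x ∈ {y : Fin n → A | ∃ a, δ < |emp y a - P a|} from ⟨a, ha⟩)]
      have ha' : x ∈ {y : Fin n → A | δ < |emp y a - P a|} := ha
      have h1 : F a = w x := Set.indicator_of_mem ha' w
      rw [← h1]
      exact Finset.single_le_sum (fun b _ => hFnn b) (Finset.mem_univ a)
    · rw [Set.indicator_of_notMem hx]
      exact Finset.sum_nonneg fun b _ => hFnn b
  calc prodP P {x : Fin n → A | ∃ a, δ < |emp x a - P a|}
      ≤ ∑ a : A, prodP P {x : Fin n → A | δ < |emp x a - P a|} := key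
    _ ≤ ∑ a : A, 1 / ((n:ℝ) * δ^2) := Finset.sum_le_sum fun a _ => cheb_one P hP hn hδ a
    _ = (Fintype.card A : ℝ) / (n * δ^2) := by
      rw [Finset.sum_const, Finset.card_univ, nsmul_eq_mul]
      ring


lemma prodP_support_eq (P : A → ℝ) {n : ℕ} (C : Set (Fin n → A)) :
    prodP P {x | x ∈ C ∧ ∀ i, P (x i) ≠ 0} = prodP P C := by
  unfold prodP
  refine Finset.sum_congr rfl fun x _ => ?_
  by_cases hC : x ∈ C
  · by_cases hs : ∀ i, P (x i) ≠ 0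
    · rw [Set.indicator_of_mem (Set.mem_setOf.2 ⟨hC, hs⟩), Set.indicator_of_mem hC]
    · push_neg at hs
      obtain ⟨i, hi⟩ := hs
      have hw : ∏ j, P (x j) = 0 := Finset.prod_eq_zero (Finset.mem_univ i) hi
      by_cases hm : x ∈ {x | x ∈ C ∧ ∀ i, P (x i) ≠ 0}
      · exact absurd (hm.2 i) (by simp [hi])
      · rw [Set.indicator_of_notMem hm, Set.indicator_of_mem hC, hw]
  · have hm : x ∉ {x | x ∈ C ∧ ∀ i, P (x i) ≠ 0} := fun h => hC h.1
    rw [Set.indicator_of_notMem hm, Set.indicator_of_notMem hC]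

lemma prod_ratio (P Q : A → ℝ) {n : ℕ} (x : Fin n → A)
    (hP : ∀ i, 0 < P (x i)) (hQ : ∀ i, 0 < Q (x i)) :
    ∏ i, Q (x i) = (∏ i, P (x i)) *
      Real.exp (∑ i, (Real.log (Q (x i)) - Real.log (P (x i)))) := by
  rw [Real.exp_sum, ← Finset.prod_mul_distrib]
  refine Finset.prod_congr rfl fun i _ => ?_
  rw [← Real.log_div (hQ i).ne' (hP i).ne', Real.exp_log (div_pos (hQ i) (hP i)),
    mul_comm, div_mul_cancel₀ _ (hP i).ne']

lemma elog2_pos_eq {t : ℝ} (ht : 0 < t) : elog2 t = ((Real.logb 2 t : ℝ) : EReal) := by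
  unfold elog2; rw [if_neg (not_le.2 ht)]

lemma term_le {t B : ℝ} (hB : 0 < B) (h : t ≤ B) {n : ℕ} (hn : 1 ≤ n) :
    elog2 t * (((n:ℝ)⁻¹ : ℝ) : EReal) ≤ ((Real.logb 2 B * (n:ℝ)⁻¹ : ℝ) : EReal) := by
  have hn0 : (0:ℝ) < n := by exact_mod_cast hn
  have hn' : (0:ℝ) < (n:ℝ)⁻¹ := by positivity
  by_cases ht : t ≤ 0
  · unfold elog2
    rw [if_pos ht, EReal.bot_mul_of_pos (by exact_mod_cast hn')]
    exact bot_le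
  · push_neg at ht
    rw [elog2_pos_eq ht, ← EReal.coe_mul, EReal.coe_le_coe_iff]
    exact mul_le_mul_of_nonneg_right (Real.logb_le_logb_of_le (by norm_num) ht h) hn'.le

lemma term_ge {t b : ℝ} (hb : 0 < b) (h : b ≤ t) {n : ℕ} (hn : 1 ≤ n) :
    ((Real.logb 2 b * (n:ℝ)⁻¹ : ℝ) : EReal) ≤ elog2 t * (((n:ℝ)⁻¹ : ℝ) : EReal) := by
  have hn0 : (0:ℝ) < n := by exact_mod_cast hn
  have hn' : (0:ℝ) < (n:ℝ)⁻¹ := by positivity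
  have ht : 0 < t := lt_of_lt_of_le hb h
  rw [elog2_pos_eq ht, ← EReal.coe_mul, EReal.coe_le_coe_iff]
  exact mul_le_mul_of_nonneg_right (Real.logb_le_logb_of_le (by norm_num) hb h) hn'.le

lemma le_coe_of_forall_eps {x : EReal} {r : ℝ}
    (h : ∀ ε : ℝ, 0 < ε → x ≤ ((r + ε : ℝ) : EReal)) : x ≤ (r : EReal) := by
  induction x using EReal.rec with
  | bot => exact bot_le
  | coe y =>
      rw [EReal.coe_le_coe_iff]
      by_contra hy
      push_neg at hy
      have := h ((y - r)/2) (by linarith)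
      rw [EReal.coe_le_coe_iff] at this
      linarith
  | top => exact absurd (h 1 one_pos) (EReal.coe_lt_top _).not_ge

lemma coe_le_of_forall_eps {x : EReal} {r : ℝ}
    (h : ∀ ε : ℝ, 0 < ε → ((r - ε : ℝ) : EReal) ≤ x) : (r : EReal) ≤ x := by
  induction x using EReal.rec with
  | bot => exact absurd (h 1 one_pos) (EReal.bot_lt_coe _).not_ge
  | coe y =>
      rw [EReal.coe_le_coe_iff]
      by_contra hy
      push_neg at hy
      have := h ((r - y)/2) (by linarith)
      rw [EReal.coe_le_coe_iff] at this
      linarith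
  | top => exact le_top

lemma converse_one (Q P : A → ℝ) (hQ : IsProbDist Q) (hP : IsProbDist P)
    (hPQ : ∀ a, Q a = 0 → P a = 0)
    (M : (n : ℕ) → Set (Fin n → A))
    (hM : Tendsto (fun n : ℕ => prodP P (M n)) atTop (nhds 1))
    {ε : ℝ} (hε : 0 < ε) :
    ((-klD P Q - ε : ℝ) : EReal) ≤
      liminf (fun n : ℕ => elog2 (prodP Q (M n)) * (((n : ℝ)⁻¹ : ℝ) : EReal)) atTop := by
  classical
  have hlog2 : (0:ℝ) < Real.log 2 := by have := Real.log_two_gt_d9; linarith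
  set C : ℝ := ∑ a, |Real.log (Q a) - Real.log (P a)| with hC
  have hC0 : 0 ≤ C := Finset.sum_nonneg fun a _ => abs_nonneg _
  set δ : ℝ := ε * Real.log 2 / (2 * (C + 1)) with hδdef
  have hδ : 0 < δ := by
    apply div_pos (mul_pos hε hlog2)
    nlinarith
  set T : (n : ℕ) → Set (Fin n → A) :=
    fun n => {x | x ∈ {x : Fin n → A | ∀ a, |emp x a - P a| ≤ δ} ∧ ∀ i, P (x i) ≠ 0} with hT
  have hmass : ∀ n : ℕ, 1 ≤ n →
      1 - (Fintype.card A : ℝ)/(n * δ^2) ≤ prodP P (T n) := by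
    intro n hn
    rw [hT, prodP_support_eq]
    have hcompl : ({x : Fin n → A | ∀ a, |emp x a - P a| ≤ δ})ᶜ
        = {x : Fin n → A | ∃ a, δ < |emp x a - P a|} := by
      ext x
      simp only [Set.mem_compl_iff, Set.mem_setOf_eq, not_forall, not_le]
    have h1 := cheb P hP hn hδ
    have h2 := prodP_add_compl hP ({x : Fin n → A | ∀ a, |emp x a - P a| ≤ δ})
    rw [hcompl] at h2
    linarith
  have hpoint : ∀ n : ℕ, 1 ≤ n → ∀ x ∈ T n,
      (∏ i, P (x i)) * (2:ℝ)^(-(n:ℝ)*(klD P Q + ε/2)) ≤ ∏ i, Q (x i) := by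
    intro n hn x hx
    obtain ⟨hx1, hx2⟩ := hx
    have hn0 : (0:ℝ) < n := by exact_mod_cast hn
    have hPpos : ∀ i, 0 < P (x i) := fun i => lt_of_le_of_ne (hP.1 (x i)) (Ne.symm (hx2 i))
    have hQpos : ∀ i, 0 < Q (x i) := by
      intro i
      rcases lt_or_eq_of_le (hQ.1 (x i)) with h | h
      · exact h
      · exact absurd (hPQ (x i) h.symm) (hx2 i)
    rw [prod_ratio P Q x hPpos hQpos]
    set g : A → ℝ := fun a => Real.log (Q a) - Real.log (P a) with hg
    have hsum : ∑ i, g (x i) = (n:ℝ) * ∑ a, emp x a * g a := by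
      rw [sum_comp_count x g, Finset.mul_sum]
      refine Finset.sum_congr rfl fun a _ => ?_
      have hcount : ((univ.filter fun i => x i = a).card : ℝ) = n * emp x a := by
        unfold emp; field_simp
      rw [hcount]; ring
    have hsplit : ∑ a, emp x a * g a = ∑ a, P a * g a + ∑ a, (emp x a - P a) * g a := by
      rw [← Finset.sum_add_distrib]
      exact Finset.sum_congr rfl fun a _ => by ring
    have hPsum : ∑ a, P a * g a = -(klD P Q * Real.log 2) := by
      have h := klD_mul_log2 P Q
      calc ∑ a, P a * g a = ∑ a, -(P a * (Real.log (P a) - Real.log (Q a))) :=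
            Finset.sum_congr rfl fun a _ => by rw [hg]; ring
        _ = -∑ a, P a * (Real.log (P a) - Real.log (Q a)) := by
            rw [Finset.sum_neg_distrib]
        _ = -(klD P Q * Real.log 2) := by rw [h]
    have hdev : |∑ a, (emp x a - P a) * g a| ≤ δ * C := by
      calc |∑ a, (emp x a - P a) * g a| ≤ ∑ a, |(emp x a - P a) * g a| :=
            Finset.abs_sum_le_sum_abs _ _
        _ ≤ ∑ a, δ * |g a| := Finset.sum_le_sum fun a _ => by
              rw [abs_mul]
              exact mul_le_mul_of_nonneg_right (hx1 a) (abs_nonneg _)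
        _ = δ * C := by rw [hC, Finset.mul_sum]
    have hδC : δ * C ≤ ε/2 * Real.log 2 := by
      rw [hδdef, div_mul_eq_mul_div, div_le_iff₀ (by nlinarith)]
      nlinarith
    have hlower : -(n:ℝ)*(klD P Q + ε/2) * Real.log 2 ≤ ∑ i, g (x i) := by
      rw [hsum, hsplit, hPsum]
      have h1 : -(δ * C) ≤ ∑ a, (emp x a - P a) * g a := by
        have := abs_le.1 hdev; linarith [this.1]
      have h2 : -(klD P Q * Real.log 2) - ε/2 * Real.log 2
          ≤ -(klD P Q * Real.log 2) + ∑ a, (emp x a - P a) * g a := by linarith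
      calc -(n:ℝ)*(klD P Q + ε/2) * Real.log 2
          = (n:ℝ) * (-(klD P Q * Real.log 2) - ε/2 * Real.log 2) := by ring
        _ ≤ (n:ℝ) * (-(klD P Q * Real.log 2) + ∑ a, (emp x a - P a) * g a) :=
            mul_le_mul_of_nonneg_left h2 hn0.le
    have hexp : (2:ℝ)^(-(n:ℝ)*(klD P Q + ε/2)) ≤ Real.exp (∑ i, g (x i)) := by
      rw [Real.rpow_def_of_pos (by norm_num : (0:ℝ) < 2)]
      apply Real.exp_le_exp.2
      calc Real.log 2 * (-(n:ℝ)*(klD P Q + ε/2)) = -(n:ℝ)*(klD P Q + ε/2) * Real.log 2 := by ring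
        _ ≤ ∑ i, g (x i) := hlower
    exact mul_le_mul_of_nonneg_left hexp (Finset.prod_nonneg fun i _ => (hPpos i).le)
  set K : ℕ → ℝ := fun n => (2:ℝ)^(-(n:ℝ)*(klD P Q + ε/2)) with hK
  have hKpos : ∀ n, 0 < K n := fun n => Real.rpow_pos_of_pos (by norm_num) _
  have hlow : ∀ n : ℕ, 1 ≤ n → K n * prodP P (M n ∩ T n) ≤ prodP Q (M n) := by
    intro n hn
    have h1 : K n * prodP P (M n ∩ T n) ≤ prodP Q (M n ∩ T n) := by
      unfold prodP
      rw [Finset.mul_sum]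
      refine Finset.sum_le_sum fun x _ => ?_
      by_cases hx : x ∈ M n ∩ T n
      · rw [Set.indicator_of_mem hx, Set.indicator_of_mem hx]
        have := hpoint n hn x hx.2
        calc K n * ∏ i, P (x i) = (∏ i, P (x i)) * K n := mul_comm _ _
          _ ≤ ∏ i, Q (x i) := this
      · rw [Set.indicator_of_notMem hx, Set.indicator_of_notMem hx, mul_zero]
    exact h1.trans (prodP_mono hQ.1 Set.inter_subset_left)
  have hbnd : Tendsto (fun n : ℕ => (Fintype.card A : ℝ)/(n * δ^2)) atTop (nhds 0) := by
    have h1 : Tendsto (fun n : ℕ => ((Fintype.card A : ℝ)/δ^2) * (1/(n:ℝ))) atTop (nhds 0) := by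
      have := tendsto_one_div_atTop_nhds_zero_nat (𝕜 := ℝ)
      have h2 := this.const_mul ((Fintype.card A : ℝ)/δ^2)
      simpa using h2
    refine h1.congr' ?_
    filter_upwards [eventually_ge_atTop 1] with n hn
    have hn0 : (0:ℝ) < n := by exact_mod_cast hn
    field_simp
  have hev : ∀ᶠ n : ℕ in atTop, 1 ≤ n ∧ 3/4 ≤ prodP P (M n) ∧
      (Fintype.card A : ℝ)/(n * δ^2) ≤ 1/4 ∧ (n:ℝ)⁻¹ ≤ ε/2 := by
    have e1 : ∀ᶠ n : ℕ in atTop, 1 ≤ n := eventually_ge_atTop 1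
    have e2 : ∀ᶠ n : ℕ in atTop, 3/4 ≤ prodP P (M n) :=
      hM.eventually_const_le (by norm_num : (3/4:ℝ) < 1)
    have e3 : ∀ᶠ n : ℕ in atTop, (Fintype.card A : ℝ)/(n * δ^2) ≤ 1/4 :=
      hbnd.eventually_le_const (by norm_num : (0:ℝ) < 1/4)
    have e4 : ∀ᶠ n : ℕ in atTop, (n:ℝ)⁻¹ ≤ ε/2 := by
      have h1 : Tendsto (fun n : ℕ => (n:ℝ)⁻¹) atTop (nhds 0) := by
        have := tendsto_one_div_atTop_nhds_zero_nat (𝕜 := ℝ)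
        simpa [one_div] using this
      exact h1.eventually_le_const (by linarith)
    filter_upwards [e1, e2, e3, e4] with n h1 h2 h3 h4
    exact ⟨h1, h2, h3, h4⟩
  refine le_liminf_of_le ?_ ?_
  · isBoundedDefault
  filter_upwards [hev] with n ⟨hn, hm34, hb14, hinv⟩
  have hn0 : (0:ℝ) < n := by exact_mod_cast hn
  have hTn : 3/4 ≤ prodP P (T n) := by
    have := hmass n hn; linarith
  have hMT : 1/2 ≤ prodP P (M n ∩ T n) := by
    have := prodP_inter_ge hP (M n) (T n)
    linarith
  have hQlow : K n * (1/2) ≤ prodP Q (M n) := by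
    have h1 := hlow n hn
    have h2 : K n * (1/2) ≤ K n * prodP P (M n ∩ T n) :=
      mul_le_mul_of_nonneg_left hMT (hKpos n).le
    linarith
  have hKhalf : 0 < K n * (1/2) := by positivity
  refine le_trans ?_ (term_ge hKhalf hQlow hn)
  rw [EReal.coe_le_coe_iff]
  have hlogK : Real.logb 2 (K n * (1/2)) = -(n:ℝ)*(klD P Q + ε/2) + Real.logb 2 (1/2) := by
    rw [Real.logb_mul (hKpos n).ne' (by norm_num), hK]
    rw [Real.logb_rpow (by norm_num) (by norm_num)]
  have hhalf : Real.logb 2 ((1:ℝ)/2) = -1 := by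
    rw [show (1:ℝ)/2 = 2⁻¹ by norm_num, Real.logb_inv]
    simp [Real.logb_self_eq_one]
  rw [hlogK, hhalf]
  have heq : (-(n:ℝ)*(klD P Q + ε/2) + -1) * (n:ℝ)⁻¹ = -(klD P Q + ε/2) - (n:ℝ)⁻¹ := by
    field_simp
    ring
  rw [heq]
  linarith


lemma prodP_avoid (P : A → ℝ) (hP : IsProbDist P) (a₀ : A) (n : ℕ) :
    prodP P {x : Fin n → A | ∀ i, x i ≠ a₀} = (1 - P a₀)^n := by
  classical
  unfold prodP
  have hpt : ∀ x : Fin n → A,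
      Set.indicator {x : Fin n → A | ∀ i, x i ≠ a₀} (fun y => ∏ i, P (y i)) x
        = ∏ i, (if x i = a₀ then 0 else P (x i)) := by
    intro x
    by_cases hx : x ∈ {x : Fin n → A | ∀ i, x i ≠ a₀}
    · rw [Set.indicator_of_mem hx]
      exact Finset.prod_congr rfl fun i _ => by rw [if_neg (hx i)]
    · rw [Set.indicator_of_notMem hx]
      have hx' : ∃ i, x i = a₀ := by
        by_contra h
        push_neg at h
        exact hx h
      obtain ⟨i, hi⟩ := hx'
      rw [Finset.prod_eq_zero (Finset.mem_univ i) (by simp [hi])]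
  rw [Finset.sum_congr rfl fun x _ => hpt x]
  have hps : ∑ x : Fin n → A, ∏ i, (if x i = a₀ then (0:ℝ) else P (x i))
      = ∏ _i : Fin n, ∑ b, (if b = a₀ then (0:ℝ) else P b) := by
    rw [Finset.prod_univ_sum, Fintype.piFinset_univ]
  rw [hps]
  have hsum : ∑ b, (if b = a₀ then (0:ℝ) else P b) = 1 - P a₀ := by
    have h1 : ∀ b, (if b = a₀ then (0:ℝ) else P b) = P b - (if b = a₀ then P b else 0) := by
      intro b; split <;> simp
    rw [Finset.sum_congr rfl fun b _ => h1 b, Finset.sum_sub_distrib, hP.2,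
      Finset.sum_ite_eq' univ a₀ P]
    simp
  rw [hsum, Finset.prod_const, Finset.card_univ, Fintype.card_fin]

end SanovAux

/-- Sanov's theorem, hypothesis-testing form: there exist sets `Mₙ ⊆ Aⁿ` typical for every
`P ∈ Ω` with `(1/n) log Qⁿ(Mₙ) → −inf_{P∈Ω} H(P,Q)` (in `EReal`; the limit is `⊥` when the
infimum is `∞`), and this separation rate is optimal. -/
theorem sanov_theorem {A : Type*} [Fintype A] [DecidableEq A] (Q : A → ℝ)
    (hQ : IsProbDist Q) (Ω : Set (A → ℝ)) (hΩ : ∀ P ∈ Ω, IsProbDist P) :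
    (∃ M : (n : ℕ) → Set (Fin n → A),
      (∀ P ∈ Ω, Tendsto (fun n : ℕ => prodP P (M n)) atTop (nhds 1)) ∧
      Tendsto (fun n : ℕ => elog2 (prodP Q (M n)) * (((n : ℝ)⁻¹ : ℝ) : EReal)) atTop
        (nhds (-(sInf ((fun P => klDE P Q) '' Ω))))) ∧
    ∀ M : (n : ℕ) → Set (Fin n → A),
      (∀ P ∈ Ω, Tendsto (fun n : ℕ => prodP P (M n)) atTop (nhds 1)) →
      -(sInf ((fun P => klDE P Q) '' Ω)) ≤
        Filter.liminf (fun n : ℕ => elog2 (prodP Q (M n)) * (((n : ℝ)⁻¹ : ℝ) : EReal)) atTop := by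
  classical
  set I : EReal := sInf ((fun P => klDE P Q) '' Ω) with hI
  have conv : ∀ M : (n : ℕ) → Set (Fin n → A),
      (∀ P ∈ Ω, Tendsto (fun n : ℕ => prodP P (M n)) atTop (nhds 1)) →
      -I ≤ liminf (fun n : ℕ => elog2 (prodP Q (M n)) * (((n : ℝ)⁻¹ : ℝ) : EReal)) atTop := by
    intro M hM
    rw [EReal.neg_le]
    refine le_sInf fun v hv => ?_
    obtain ⟨P, hPΩ, rfl⟩ := hv
    by_cases hac : ∀ a, Q a = 0 → P a = 0
    · simp only [klDE, if_pos hac]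
      rw [EReal.neg_le, ← EReal.coe_neg]
      refine coe_le_of_forall_eps fun ε hε => ?_
      have := converse_one Q P hQ (hΩ P hPΩ) hac M (hM P hPΩ) hε
      exact this
    · simp only [klDE, if_neg hac]
      exact le_top
  set δs : ℕ → ℝ := fun n => ((n:ℝ)) ^ (-(1/4 : ℝ)) with hδs
  have hδpos : ∀ n : ℕ, 1 ≤ n → 0 < δs n := by
    intro n hn
    exact Real.rpow_pos_of_pos (by exact_mod_cast hn) _
  have hδ0 : Tendsto δs atTop (nhds 0) :=
    (tendsto_rpow_neg_atTop (by norm_num : (0:ℝ) < 1/4)).comp tendsto_natCast_atTop_atTop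
  have hbnd0 : Tendsto (fun n : ℕ => (Fintype.card A : ℝ) / (n * δs n ^ 2)) atTop (nhds 0) := by
    have hkey : ∀ᶠ n : ℕ in atTop, (Fintype.card A : ℝ) * ((n:ℝ)) ^ (-(1/2:ℝ))
        = (Fintype.card A : ℝ) / (n * δs n ^ 2) := by
      filter_upwards [eventually_ge_atTop 1] with n hn
      have hn0 : (0:ℝ) < n := by exact_mod_cast hn
      have h1 : δs n ^ 2 = ((n:ℝ)) ^ (-(1/2:ℝ)) := by
        rw [hδs]
        rw [← Real.rpow_natCast (((n:ℝ)) ^ (-(1/4:ℝ))) 2, ← Real.rpow_mul hn0.le]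
        norm_num
      have h2 : (n:ℝ) * ((n:ℝ)) ^ (-(1/2:ℝ)) = ((n:ℝ)) ^ ((1/2:ℝ)) := by
        nth_rewrite 1 [show (n:ℝ) = ((n:ℝ)) ^ (1:ℝ) by rw [Real.rpow_one]]
        rw [← Real.rpow_add hn0]
        norm_num
      rw [h1, h2, eq_div_iff (by positivity), mul_assoc, ← Real.rpow_add hn0]
      norm_num
    have h3 : Tendsto (fun n : ℕ => (Fintype.card A : ℝ) * ((n:ℝ)) ^ (-(1/2:ℝ))) atTop (nhds 0) := by
      have h4 := ((tendsto_rpow_neg_atTop (by norm_num : (0:ℝ) < 1/2)).comp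
        tendsto_natCast_atTop_atTop).const_mul (Fintype.card A : ℝ)
      simpa using h4
    exact Tendsto.congr' hkey h3
  set Ms : (n : ℕ) → Set (Fin n → A) := fun n =>
    {x | (∃ i, Q (x i) = 0) ∨
         ∃ P, P ∈ Ω ∧ (∀ a, Q a = 0 → P a = 0) ∧ ∀ a, |emp x a - P a| ≤ δs n} with hMs
  have goal1 : ∀ P ∈ Ω, Tendsto (fun n : ℕ => prodP P (Ms n)) atTop (nhds 1) := by
    intro P hPΩ
    have hPd := hΩ P hPΩ
    by_cases hac : ∀ a, Q a = 0 → P a = 0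
    · have hub : ∀ n : ℕ, prodP P (Ms n) ≤ 1 := fun n => prodP_le_one hPd _
      have hlb : ∀ᶠ n : ℕ in atTop,
          1 - (Fintype.card A : ℝ)/(n * δs n ^ 2) ≤ prodP P (Ms n) := by
        filter_upwards [eventually_ge_atTop 1] with n hn
        have hsub : {x : Fin n → A | ∀ a, |emp x a - P a| ≤ δs n} ⊆ Ms n := by
          intro x hx
          exact Or.inr ⟨P, hPΩ, hac, hx⟩
        have h2 := prodP_add_compl hPd ({x : Fin n → A | ∀ a, |emp x a - P a| ≤ δs n})
        have hcompl : ({x : Fin n → A | ∀ a, |emp x a - P a| ≤ δs n})ᶜ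
            = {x : Fin n → A | ∃ a, δs n < |emp x a - P a|} := by
          ext x
          simp only [Set.mem_compl_iff, Set.mem_setOf_eq, not_forall, not_le]
        have h1 := cheb P hPd hn (hδpos n hn)
        have h3 := prodP_mono hPd.1 hsub
        rw [hcompl] at h2
        linarith
      have hlim : Tendsto (fun n : ℕ => 1 - (Fintype.card A : ℝ)/(n * δs n ^ 2)) atTop (nhds 1) := by
        have := hbnd0.const_sub (1:ℝ)
        simpa using this
      exact tendsto_of_tendsto_of_tendsto_of_le_of_le' hlim tendsto_const_nhds hlb
        (Filter.Eventually.of_forall hub)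
    · push_neg at hac
      obtain ⟨a₀, hQa₀, hPa₀⟩ := hac
      have hPa₀pos : 0 < P a₀ := lt_of_le_of_ne (hPd.1 a₀) (Ne.symm hPa₀)
      have hlb : ∀ n : ℕ, 1 - (1 - P a₀)^n ≤ prodP P (Ms n) := by
        intro n
        have hsub : {x : Fin n → A | ∃ i, x i = a₀} ⊆ Ms n := by
          rintro x ⟨i, hi⟩
          exact Or.inl ⟨i, by rw [hi]; exact hQa₀⟩
        have h2 := prodP_add_compl hPd ({x : Fin n → A | ∃ i, x i = a₀})
        have hcompl : ({x : Fin n → A | ∃ i, x i = a₀})ᶜ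
            = {x : Fin n → A | ∀ i, x i ≠ a₀} := by
          ext x
          simp only [Set.mem_compl_iff, Set.mem_setOf_eq, not_exists]
        rw [hcompl, prodP_avoid P hPd a₀ n] at h2
        have h3 := prodP_mono hPd.1 hsub
        linarith
      have hlim : Tendsto (fun n : ℕ => 1 - (1 - P a₀)^n) atTop (nhds 1) := by
        have hP1 : P a₀ ≤ 1 := single_le_one hPd a₀
        have h4 := tendsto_pow_atTop_nhds_zero_of_lt_one (by linarith : (0:ℝ) ≤ 1 - P a₀)
          (by linarith : 1 - P a₀ < 1)
        have := h4.const_sub (1:ℝ)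
        simpa using this
      exact tendsto_of_tendsto_of_tendsto_of_le_of_le hlim tendsto_const_nhds hlb
        (fun n => prodP_le_one hPd _)
  refine ⟨⟨Ms, goal1, ?_⟩, conv⟩
  by_cases hcase : ∃ P, P ∈ Ω ∧ ∀ a, Q a = 0 → P a = 0
  · obtain ⟨P₀, hP₀Ω, hP₀ac⟩ := hcase
    have hIub : I ≤ ((klD P₀ Q : ℝ) : EReal) := by
      have h5 : klDE P₀ Q = ((klD P₀ Q : ℝ) : EReal) := by rw [klDE, if_pos hP₀ac]
      rw [← h5]
      exact sInf_le ⟨P₀, hP₀Ω, rfl⟩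
    have hIlb : ((-(2 * Fintype.card A) : ℝ) : EReal) ≤ I := by
      refine le_sInf fun v hv => ?_
      obtain ⟨P, hPΩ, rfl⟩ := hv
      by_cases hac : ∀ a, Q a = 0 → P a = 0
      · simp only [klDE, if_pos hac, EReal.coe_le_coe_iff]
        exact klD_lb hQ (hΩ P hPΩ)
      · simp only [klDE, if_neg hac]
        exact le_top
    obtain ⟨r, hr⟩ : ∃ r : ℝ, I = (r : EReal) := by
      have ht : I ≠ ⊤ := (lt_of_le_of_lt hIub (EReal.coe_lt_top _)).ne
      have hb : I ≠ ⊥ := (lt_of_lt_of_le (EReal.bot_lt_coe _) hIlb).ne'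
      exact ⟨I.toReal, (EReal.coe_toReal ht hb).symm⟩
    have hlimsup : limsup (fun n : ℕ => elog2 (prodP Q (Ms n)) * (((n : ℝ)⁻¹ : ℝ) : EReal)) atTop
        ≤ ((-r : ℝ) : EReal) := by
      refine le_coe_of_forall_eps fun ε hε => ?_
      obtain ⟨δu, hδu, hδu'⟩ := klD_unif Q hε
      have hevn : ∀ᶠ n : ℕ in atTop, 1 ≤ n ∧ δs n ≤ δu :=
        (eventually_ge_atTop 1).and (hδ0.eventually_le_const hδu)
      have hterm : ∀ᶠ n : ℕ in atTop,
          elog2 (prodP Q (Ms n)) * (((n : ℝ)⁻¹ : ℝ) : EReal)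
            ≤ (((Fintype.card A : ℝ) * Real.logb 2 ((n:ℝ)+1) * (n:ℝ)⁻¹ - (r - ε) : ℝ) : EReal) := by
        filter_upwards [hevn] with n hpair
        obtain ⟨hn, hδn⟩ := hpair
        have hn0 : (0:ℝ) < n := by exact_mod_cast hn
        have hMcond : ∀ x ∈ Ms n, (∀ i, Q (x i) ≠ 0) → r - ε ≤ klD (emp x) Q := by
          intro x hx hz
          rcases hx with ⟨i, hi⟩ | ⟨P, hPΩ, hac, hclose⟩
          · exact absurd hi (hz i)
          · have hPd := hΩ P hPΩ
            have hbox1 : ∀ a, 0 ≤ emp x a ∧ emp x a ≤ 1 :=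
              fun a => ⟨emp_nonneg x a, emp_le_one x a⟩
            have hbox2 : ∀ a, 0 ≤ P a ∧ P a ≤ 1 := fun a => ⟨hPd.1 a, single_le_one hPd a⟩
            have hd : ∀ a, |emp x a - P a| ≤ δu := fun a => (hclose a).trans hδn
            have hcont := hδu' (emp x) P hbox1 hbox2 hd
            have hge : r ≤ klD P Q := by
              have h1 : I ≤ klDE P Q := sInf_le ⟨P, hPΩ, rfl⟩
              rw [hr] at h1
              simp only [klDE, if_pos hac, EReal.coe_le_coe_iff] at h1
              exact h1
            have h6 := abs_le.1 hcont
            linarith [h6.1]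
        have hcb := count_bound Q hQ.1 hn (Ms n) (r - ε) hMcond
        have hBpos : 0 < ((n:ℝ)+1)^(Fintype.card A) * (2:ℝ)^(-(n:ℝ)*(r-ε)) := by positivity
        refine (term_le hBpos hcb hn).trans ?_
        rw [EReal.coe_le_coe_iff]
        have hlogB : Real.logb 2 (((n:ℝ)+1)^(Fintype.card A) * (2:ℝ)^(-(n:ℝ)*(r-ε)))
            = (Fintype.card A : ℝ) * Real.logb 2 ((n:ℝ)+1) + (-(n:ℝ)*(r-ε)) := by
          rw [Real.logb_mul (by positivity) (by positivity), Real.logb_pow,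
            Real.logb_rpow (by norm_num) (by norm_num)]
        rw [hlogB]
        have h7 : ((Fintype.card A : ℝ) * Real.logb 2 ((n:ℝ)+1) + (-(n:ℝ)*(r-ε))) * (n:ℝ)⁻¹
            = (Fintype.card A : ℝ) * Real.logb 2 ((n:ℝ)+1) * (n:ℝ)⁻¹ - (r - ε) := by
          field_simp
          ring
        rw [h7]
      have hrhs : Tendsto (fun n : ℕ =>
          (Fintype.card A : ℝ) * Real.logb 2 ((n:ℝ)+1) * (n:ℝ)⁻¹ - (r - ε)) atTop
          (nhds (-r + ε)) := by
        have f1 : Tendsto (fun n : ℕ => Real.log ((n:ℝ)+1) / ((n:ℝ)+1)) atTop (nhds 0) := by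
          have h0 : Tendsto (fun x : ℝ => Real.log x / x) atTop (nhds 0) := by
            have := Real.isLittleO_log_id_atTop.tendsto_div_nhds_zero
            simpa using this
          exact h0.comp (tendsto_atTop_add_const_right atTop 1 tendsto_natCast_atTop_atTop)
        have f2 : Tendsto (fun n : ℕ => ((n:ℝ)+1) * (n:ℝ)⁻¹) atTop (nhds 1) := by
          have h1 : Tendsto (fun n : ℕ => 1 + (n:ℝ)⁻¹) atTop (nhds 1) := by
            have h2 := tendsto_one_div_atTop_nhds_zero_nat.const_add (1:ℝ)
            simpa [one_div] using h2
          refine Tendsto.congr' ?_ h1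
          filter_upwards [eventually_ge_atTop 1] with n hn
          have hn0 : (0:ℝ) < n := by exact_mod_cast hn
          field_simp
        have f3 : Tendsto (fun n : ℕ => Real.log ((n:ℝ)+1) * (n:ℝ)⁻¹) atTop (nhds 0) := by
          have f4 := f1.mul f2
          rw [zero_mul] at f4
          refine Tendsto.congr (fun n => ?_) f4
          rcases Nat.eq_zero_or_pos n with h | h
          · subst h; simp
          · have hn0 : (0:ℝ) < n := by exact_mod_cast h
            field_simp
        have f5 : Tendsto (fun n : ℕ => Real.logb 2 ((n:ℝ)+1) * (n:ℝ)⁻¹) atTop (nhds 0) := by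
          have f6 := f3.div_const (Real.log 2)
          rw [zero_div] at f6
          refine Tendsto.congr (fun n => ?_) f6
          rw [Real.logb]
          ring
        have f7 := (f5.const_mul (Fintype.card A : ℝ)).sub_const (r - ε)
        have f8 : (Fintype.card A : ℝ) * 0 - (r - ε) = -r + ε := by ring
        rw [f8] at f7
        refine Tendsto.congr (fun n => by ring) f7
      calc limsup (fun n : ℕ => elog2 (prodP Q (Ms n)) * (((n : ℝ)⁻¹ : ℝ) : EReal)) atTop
          ≤ limsup (fun n : ℕ =>
            (((Fintype.card A : ℝ) * Real.logb 2 ((n:ℝ)+1) * (n:ℝ)⁻¹ - (r - ε) : ℝ) : EReal)) atTop :=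
            limsup_le_limsup hterm
        _ = ((-r + ε : ℝ) : EReal) := Tendsto.limsup_eq (EReal.tendsto_coe.2 hrhs)
    have hneg : -I = ((-r : ℝ) : EReal) := by rw [hr, ← EReal.coe_neg]
    rw [hneg]
    have hliminf : ((-r : ℝ) : EReal)
        ≤ liminf (fun n : ℕ => elog2 (prodP Q (Ms n)) * (((n : ℝ)⁻¹ : ℝ) : EReal)) atTop := by
      have h8 := conv Ms goal1
      rw [hneg] at h8
      exact h8
    exact tendsto_of_le_liminf_of_limsup_le hliminf hlimsup
  · push_neg at hcase
    have hIT : I = ⊤ := by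
      rw [hI]
      refine sInf_eq_top.2 fun v hv => ?_
      obtain ⟨P, hPΩ, rfl⟩ := hv
      simp only [klDE]
      rw [if_neg]
      intro hac
      obtain ⟨a, ha1, ha2⟩ := hcase P hPΩ
      exact ha2 (hac a ha1)
    have hzero : ∀ n : ℕ, prodP Q (Ms n) = 0 := by
      intro n
      unfold prodP
      rw [Finset.sum_eq_zero]
      intro x _
      by_cases hx : x ∈ Ms n
      · rw [Set.indicator_of_mem hx]
        rcases hx with ⟨i, hi⟩ | ⟨P, hPΩ, hac, _⟩
        · exact Finset.prod_eq_zero (Finset.mem_univ i) hi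
        · obtain ⟨a, ha1, ha2⟩ := hcase P hPΩ
          exact absurd (hac a ha1) ha2
      · rw [Set.indicator_of_notMem hx]
    rw [hIT]
    have hbot : ∀ᶠ n : ℕ in atTop,
        (⊥ : EReal) = elog2 (prodP Q (Ms n)) * (((n : ℝ)⁻¹ : ℝ) : EReal) := by
      filter_upwards [eventually_ge_atTop 1] with n hn
      rw [hzero n]
      unfold elog2
      rw [if_pos le_rfl, EReal.bot_mul_of_pos]
      exact_mod_cast (show (0:ℝ) < (n:ℝ)⁻¹ by positivity)
    have : -(⊤:EReal) = ⊥ := rfl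
    rw [this]
    exact Tendsto.congr' hbot tendsto_const_nhds
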